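/- The set S equals ℚ, the set of all rational numbers; that is, a real number z belongs to S if and only if z is rational. -/

import Mathlib

/-- The set `S ⊆ ℝ`: `z ∈ S` iff there is a finite sequence starting at `0`, ending at
`z`, each step applying `f₊(x) = 1/(1+x)` (with `x ≠ -1`) or `f₋(x) = 1/(1-x)`
(with `x ≠ 1`). -/
def ratioSet : Set ℝ :=
  {z | ∃ (n : ℕ) (x : ℕ → ℝ), x 0 = 0 ∧ x n = z ∧
    ∀ i < n, (x i ≠ -1 ∧ x (i + 1) = 1 / (1 + x i)) ∨ (x i ≠ 1 ∧ x (i + 1) = 1 / (1 - x i))}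

lemma ratioSet_zero_mem : (0:ℝ) ∈ ratioSet :=
  ⟨0, fun _ => 0, rfl, rfl, fun i h => absurd h (Nat.not_lt_zero i)⟩

lemma ratioSet_step {x y : ℝ} (hx : x ∈ ratioSet)
    (h : (x ≠ -1 ∧ y = 1 / (1 + x)) ∨ (x ≠ 1 ∧ y = 1 / (1 - x))) : y ∈ ratioSet := by
  obtain ⟨n, f, h0, hn, hstep⟩ := hx
  refine ⟨n + 1, fun i => if i = n + 1 then y else f i, ?_, ?_, ?_⟩
  · have hz : (0:ℕ) ≠ n + 1 := by omega
    simp [hz, h0]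
  · simp
  · intro i hi
    rcases Nat.lt_or_ge i n with hlt | hge
    · have h1 : i ≠ n + 1 := by omega
      have h2 : i + 1 ≠ n + 1 := by omega
      simpa [h1, h2, show i ≠ n by omega] using hstep i hlt
    · have hie : i = n := by omega
      subst hie
      have h1 : i ≠ i + 1 := by omega
      simpa [h1, hn] using h

lemma ratioSet_pos_nat : ∀ s a b : ℕ, a + b ≤ s → 0 < a → 0 < b →
    ((a:ℝ) / b) ∈ ratioSet := by
  intro s
  induction s with
  | zero => intro a b h ha hb; omega
  | succ s ih =>
    intro a b h ha hb
    have ha' : (a:ℝ) ≠ 0 := by positivity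
    have hb' : (b:ℝ) ≠ 0 := by positivity
    rcases lt_trichotomy a b with hab | hab | hab
    · -- a < b : a/b = 1/(1 + (b-a)/a)
      have hx := ih (b - a) a (by omega) (by omega) ha
      apply ratioSet_step hx
      left
      have hpos : (0:ℝ) ≤ (↑(b - a) : ℝ) / a := by positivity
      refine ⟨by intro hc; rw [hc] at hpos; linarith, ?_⟩
      have hcast : ((b - a : ℕ) : ℝ) = (b:ℝ) - a := by
        push_cast [Nat.cast_sub hab.le]; ring
      rw [hcast]
      field_simp
      rw [show (a:ℝ) + ((b:ℝ) - a) = b by ring, div_self hb']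
    · -- a = b : a/b = 1 = 1/(1+0)
      subst hab
      apply ratioSet_step ratioSet_zero_mem
      left
      refine ⟨by norm_num, ?_⟩
      rw [div_self ha']
      norm_num
    · -- a > b : first reach (a-b)/a = 1/(1 + b/(a-b)), then a/b = 1/(1 - (a-b)/a)
      have hx := ih b (a - b) (by omega) hb (by omega)
      have hmid : ((a - b : ℕ) : ℝ) / a ∈ ratioSet := by
        apply ratioSet_step hx
        left
        have hab' : (0:ℝ) < ((a - b : ℕ) : ℝ) := by
          have : 0 < a - b := by omega
          exact_mod_cast this
        have hpos : (0:ℝ) ≤ (b:ℝ) / ((a - b : ℕ) : ℝ) := by positivity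
        refine ⟨by intro hc; rw [hc] at hpos; linarith, ?_⟩
        have hcast : ((a - b : ℕ) : ℝ) = (a:ℝ) - b := by
          push_cast [Nat.cast_sub hab.le]; ring
        rw [hcast] at hab' ⊢
        field_simp
        ring
      apply ratioSet_step hmid
      right
      have hcast : ((a - b : ℕ) : ℝ) = (a:ℝ) - b := by
        push_cast [Nat.cast_sub hab.le]; ring
      rw [hcast]
      have hblt : ((a:ℝ) - b) / a < 1 := by
        rw [div_lt_one (by positivity)]
        have : (0:ℝ) < b := by positivity
        linarith
      refine ⟨ne_of_lt hblt, ?_⟩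
      field_simp
      rw [show (a:ℝ) - ((a:ℝ) - b) = b by ring, div_self hb']

lemma ratioSet_posrat (q : ℚ) (hq : 0 < q) : ((q:ℝ)) ∈ ratioSet := by
  have hnum : 0 < q.num := Rat.num_pos.mpr hq
  have hcast : ((q.num.toNat : ℝ)) / (q.den : ℝ) = (q:ℝ) := by
    rw [Rat.cast_def]
    congr 1
    exact_mod_cast Int.toNat_of_nonneg hnum.le
  rw [← hcast]
  exact ratioSet_pos_nat (q.num.toNat + q.den) q.num.toNat q.den le_rfl
    (by omega) q.pos

lemma ratioSet_rat (q : ℚ) : ((q:ℝ)) ∈ ratioSet := by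
  rcases lt_trichotomy q 0 with hq | hq | hq
  · -- negative : q = 1/(1 - (1 - 1/q))
    have hq' : (q:ℝ) ≠ 0 := by exact_mod_cast hq.ne
    have hp : (0:ℚ) < 1 - 1/q := by
      have : 1/q < 0 := by exact div_neg_of_pos_of_neg one_pos hq
      linarith
    have hx := ratioSet_posrat (1 - 1/q) hp
    apply ratioSet_step hx
    right
    have hgt : (1:ℝ) < ((1 - 1/q : ℚ) : ℝ) := by
      have : (1/q : ℚ) < 0 := div_neg_of_pos_of_neg one_pos hq
      push_cast
      have : ((1/q : ℚ) : ℝ) < 0 := by exact_mod_cast this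
      push_cast at this
      linarith
    refine ⟨by intro hc; rw [hc] at hgt; linarith, ?_⟩
    push_cast
    field_simp
    ring
  · simp [hq, ratioSet_zero_mem]
  · exact ratioSet_posrat q hq

/-- The set `S` is exactly the set of rational numbers: a real `z` belongs to `S` iff `z`
is rational. -/
theorem ratioSet_eq_rationals : ratioSet = Set.range ((↑) : ℚ → ℝ) := by
  ext z
  constructor
  · rintro ⟨n, x, h0, hn, hstep⟩
    have key : ∀ i, i ≤ n → ∃ q : ℚ, x i = (q:ℝ) := by
      intro i
      induction i with
      | zero => intro _; exact ⟨0, by simp [h0]⟩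
      | succ i ih =>
        intro hi
        obtain ⟨q, hq⟩ := ih (by omega)
        rcases hstep i (by omega) with ⟨h1, h2⟩ | ⟨h1, h2⟩
        · exact ⟨1 / (1 + q), by rw [h2, hq]; push_cast; ring⟩
        · exact ⟨1 / (1 - q), by rw [h2, hq]; push_cast; ring⟩
    obtain ⟨q, hq⟩ := key n le_rfl
    exact ⟨q, by rw [← hn, hq]⟩
  · rintro ⟨q, rfl⟩
    exact ratioSet_rat q
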